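/- Assume (injectivity) that θ ≠ θ' implies μ{x : f_θ(x) ≠ f_{θ'}(x)} > 0, and (completeness) that Θ is complete for the pseudometric d(θ,θ') = μ{x : f_θ(x) ≠ f_{θ'}(x)} (every d-Cauchy sequence in Θ has a d-limit in Θ). Then for every θ ∈ Θ there exists a GLP θ* such that for μ-a.e. x, f_{θ*}(x) ≠ g(x) implies f_θ(x) ≠ g(x) (equivalently, ℓ(f_{θ*}(x), g(x)) ≤ ℓ(f_θ(x), g(x)) for μ-a.e. x); consequently, Θ is covered by the regions Ã_{θ*} := {θ : ℓ(f_{θ*}(x), g(x)) ≤ ℓ(f_θ(x), g(x)) for μ-a.e. x} over GLPs θ*. -/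

import Mathlib

open MeasureTheory Filter
open scoped ENNReal

noncomputable section

/-- `θs` is a generalized optimum point (GLP): every μ-distinguishable
hypothesis is strictly beaten by `θs` on a positive-measure set. -/
def IsGLP {X Θ : Type*} [MeasurableSpace X] (μ : Measure X) (f : Θ → X → Bool)
    (g : X → Bool) (θs : Θ) : Prop :=
  ∀ θ' : Θ, 0 < μ {x | f θ' x ≠ f θs x} →
    0 < μ {x | f θs x = g x ∧ f θ' x ≠ g x}

/-- under injectivity and completeness of the hypothesis class
for the pseudometric `d(θ,θ') = μ{x : f_θ(x) ≠ f_θ'(x)}`, every `θ ∈ Θ` lies in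
the region `Ã_{θ*}` of some GLP `θ*`: there is a GLP `θ*` such that for μ-a.e.
`x`, `f_{θ*}(x) ≠ g(x)` implies `f_θ(x) ≠ g(x)` (i.e. the regions `Ã_{θ*}` over
GLPs `θ*` cover `Θ`). -/
theorem regions_of_glps_cover
    {X Θ : Type*} [MeasurableSpace X] (μ : Measure X) [IsProbabilityMeasure μ]
    (f : Θ → X → Bool) (g : X → Bool)
    (hf : ∀ θ, Measurable (f θ)) (hg : Measurable g)
    -- injectivity
    (hinj : ∀ θ θ' : Θ, θ ≠ θ' → 0 < μ {x | f θ x ≠ f θ' x})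
    -- completeness for the pseudometric d(θ,θ') = μ{x : f_θ(x) ≠ f_θ'(x)}
    (hcomplete : ∀ u : ℕ → Θ,
      (∀ ε : ℝ, 0 < ε → ∃ N : ℕ, ∀ i ≥ N, ∀ j ≥ N,
        (μ {x | f (u i) x ≠ f (u j) x}).toReal < ε) →
      ∃ θlim : Θ,
        Tendsto (fun i => (μ {x | f (u i) x ≠ f θlim x}).toReal) atTop (nhds 0)) :
    ∀ θ : Θ, ∃ θstar : Θ, IsGLP μ f g θstar ∧
      ∀ᵐ x ∂μ, f θstar x ≠ g x → f θ x ≠ g x := by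
  classical
  intro θ
  -- error sets
  set E : Θ → Set X := fun t => {x | f t x ≠ g x} with hEdef
  have hEm : ∀ t, MeasurableSet (E t) := by
    intro t
    have h1 : E t = (fun x => (f t x, g x)) ⁻¹' {p : Bool × Bool | p.1 ≠ p.2} := rfl
    rw [h1]
    exact ((hf t).prodMk hg) ((Set.to_countable _).measurableSet)
  -- disagreement sets
  have hDE : ∀ a b : Θ, {x | f a x ≠ f b x} = (E a \ E b) ∪ (E b \ E a) := by
    intro a b
    have key : ∀ p q r : Bool, (p ≠ q ↔ (p ≠ r ∧ ¬ q ≠ r) ∨ (q ≠ r ∧ ¬ p ≠ r)) := by decide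
    ext x
    simpa [hEdef, Set.mem_union, Set.mem_diff, Set.mem_setOf_eq] using key (f a x) (f b x) (g x)
  have hDmeas : ∀ a b : Θ, μ {x | f a x ≠ f b x} = μ (E a \ E b) + μ (E b \ E a) := by
    intro a b
    rw [hDE a b]
    exact measure_union disjoint_sdiff_sdiff ((hEm b).diff (hEm a))
  -- domination
  set Dom : Θ → Θ → Prop := fun b a => μ (E b \ E a) = 0 with hDomDef
  have dom_refl : ∀ a, Dom a a := by intro a; simp [hDomDef]
  have dom_trans : ∀ {c b a}, Dom c b → Dom b a → Dom c a := by
    intro c b a h1 h2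
    have hsub : E c \ E a ⊆ (E c \ E b) ∪ (E b \ E a) := by
      intro x ⟨hx1, hx2⟩
      by_cases hb : x ∈ E b
      · exact Or.inr ⟨hb, hx2⟩
      · exact Or.inl ⟨hx1, hb⟩
    have := (measure_mono hsub).trans (measure_union_le (μ := μ) (E c \ E b) (E b \ E a))
    rw [h1, h2] at this
    simpa using this
  have dom_eq : ∀ {b a}, Dom b a → μ (E b) = μ (E b ∩ E a) := by
    intro b a h
    have h2 := measure_inter_add_diff (μ := μ) (E b) (hEm a)
    rw [h] at h2
    simpa using h2.symm
  have dom_le : ∀ {b a}, Dom b a → μ (E b) ≤ μ (E a) := by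
    intro b a h
    rw [dom_eq h]
    exact measure_mono Set.inter_subset_right
  -- infimum of measures of errors over dominators
  set m : Θ → ℝ≥0∞ := fun t => ⨅ p : {t' : Θ // Dom t' t}, (μ (E p.1) : ℝ≥0∞) with hmdef
  have m_le : ∀ {t' t}, Dom t' t → m t ≤ μ (E t') := by
    intro t' t h
    exact iInf_le (fun p : {t' : Θ // Dom t' t} => (μ (E p.1) : ℝ≥0∞)) ⟨t', h⟩
  have m_ne_top : ∀ t, m t ≠ ⊤ :=
    fun t => ((m_le (dom_refl t)).trans_lt (measure_lt_top μ _)).ne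
  have m_mono : ∀ {b a}, Dom b a → m a ≤ m b := by
    intro b a h
    exact le_iInf fun p => m_le (dom_trans p.2 h)
  -- recursive construction
  have hstep : ∀ (n : ℕ) (t : Θ), ∃ t' : Θ, Dom t' t ∧ μ (E t') < m t + (1/2 : ℝ≥0∞) ^ n := by
    intro n t
    have hlt : m t < m t + (1/2 : ℝ≥0∞) ^ n :=
      ENNReal.lt_add_right (m_ne_top t) (pow_ne_zero _ (by norm_num))
    rw [hmdef] at hlt
    obtain ⟨⟨t', hd⟩, h⟩ := iInf_lt_iff.1 hlt
    exact ⟨t', hd, h⟩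
  choose F hF1 hF2 using hstep
  set u : ℕ → Θ := fun n => Nat.rec θ (fun k t => F k t) n with hudef
  have hu0 : u 0 = θ := rfl
  have husucc : ∀ n, u (n + 1) = F n (u n) := fun n => rfl
  have domU : ∀ n, Dom (u (n + 1)) (u n) := by intro n; rw [husucc]; exact hF1 n (u n)
  have uE_lt : ∀ n, μ (E (u (n + 1))) < m (u n) + (1/2 : ℝ≥0∞) ^ n := by
    intro n; rw [husucc]; exact hF2 n (u n)
  have domChain : ∀ i j, i ≤ j → Dom (u j) (u i) := by
    intro i j hij
    induction j, hij using Nat.le_induction with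
    | base => exact dom_refl _
    | succ k hk ih => exact dom_trans (domU k) ih
  -- key identity along the chain
  have chain_add : ∀ i j, i ≤ j →
      μ {x | f (u i) x ≠ f (u j) x} + μ (E (u j)) = μ (E (u i)) := by
    intro i j hij
    have hd := domChain i j hij
    rw [hDmeas, hd, add_zero]
    have h1 := measure_inter_add_diff (μ := μ) (E (u i)) (hEm (u j))
    have h2 : μ (E (u j)) = μ (E (u i) ∩ E (u j)) := by
      rw [dom_eq hd, Set.inter_comm]
    rw [h2, add_comm]
    exact h1
  -- measures of errors are nonincreasing along the chain, and bounded below by m (u N)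
  have uE_mono : ∀ i j, i ≤ j → μ (E (u j)) ≤ μ (E (u i)) :=
    fun i j hij => dom_le (domChain i j hij)
  have m_lb : ∀ N j, N ≤ j → m (u N) ≤ μ (E (u j)) :=
    fun N j h => m_le (domChain N j h)
  -- Cauchy bound
  have cauchy_bound : ∀ N i j, N + 1 ≤ i → i ≤ j →
      μ {x | f (u i) x ≠ f (u j) x} < (1/2 : ℝ≥0∞) ^ N := by
    intro N i j hNi hij
    have h1 : μ {x | f (u i) x ≠ f (u j) x} + m (u N)
        < (1/2 : ℝ≥0∞) ^ N + m (u N) := by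
      calc μ {x | f (u i) x ≠ f (u j) x} + m (u N)
          ≤ μ {x | f (u i) x ≠ f (u j) x} + μ (E (u j)) :=
            add_le_add_right (m_lb N j (hNi.trans hij |>.trans' (Nat.le_succ N) |>.trans' (Nat.le_refl _) |>.trans (le_refl _))) _
        _ = μ (E (u i)) := chain_add i j hij
        _ ≤ μ (E (u (N + 1))) := uE_mono (N + 1) i hNi
        _ < m (u N) + (1/2 : ℝ≥0∞) ^ N := uE_lt N
        _ = (1/2 : ℝ≥0∞) ^ N + m (u N) := add_comm _ _
    exact lt_of_add_lt_add_right h1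
  -- the sequence is Cauchy in the pseudometric
  have hcau : ∀ ε : ℝ, 0 < ε → ∃ N : ℕ, ∀ i ≥ N, ∀ j ≥ N,
      (μ {x | f (u i) x ≠ f (u j) x}).toReal < ε := by
    intro ε hε
    obtain ⟨N, hN⟩ := exists_pow_lt_of_lt_one hε (by norm_num : (1/2 : ℝ) < 1)
    refine ⟨N + 1, fun i hi j hj => ?_⟩
    have hsymm : ∀ a b : Θ, {x | f a x ≠ f b x} = {x | f b x ≠ f a x} := by
      intro a b; ext x; exact ne_comm
    have key : ∀ i j, N + 1 ≤ i → i ≤ j →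
        (μ {x | f (u i) x ≠ f (u j) x}).toReal < ε := by
      intro i j h1 h2
      have hb := cauchy_bound N i j h1 h2
      have h3 : (μ {x | f (u i) x ≠ f (u j) x}).toReal < ((1/2 : ℝ≥0∞) ^ N).toReal :=
        ENNReal.toReal_strict_mono (by simp) hb
      have h4 : ((1/2 : ℝ≥0∞) ^ N).toReal = (1/2 : ℝ) ^ N := by
        simp [ENNReal.toReal_pow]
      rw [h4] at h3
      exact h3.trans hN
    rcases le_total i j with h | h
    · exact key i j hi h
    · rw [hsymm]; exact key j i hj h
  obtain ⟨θlim, hlim⟩ := hcomplete u hcau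
  -- the limit dominates every element of the chain
  have domLim : ∀ n, Dom θlim (u n) := by
    intro n
    have key : ∀ j, n ≤ j → μ (E θlim \ E (u n)) ≤ μ {x | f (u j) x ≠ f θlim x} := by
      intro j hj
      have hsub : E θlim \ E (u n) ⊆ {x | f (u j) x ≠ f θlim x} ∪ (E (u j) \ E (u n)) := by
        intro x ⟨hx1, hx2⟩
        by_cases hfx : f (u j) x = f θlim x
        · refine Or.inr ⟨?_, hx2⟩
          show f (u j) x ≠ g x
          rw [hfx]; exact hx1
        · exact Or.inl hfx
      calc μ (E θlim \ E (u n))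
          ≤ μ ({x | f (u j) x ≠ f θlim x} ∪ (E (u j) \ E (u n))) := measure_mono hsub
        _ ≤ μ {x | f (u j) x ≠ f θlim x} + μ (E (u j) \ E (u n)) :=
            measure_union_le _ _
        _ = μ {x | f (u j) x ≠ f θlim x} := by rw [domChain n j hj, add_zero]
    have hto : (μ (E θlim \ E (u n))).toReal ≤ 0 := by
      refine ge_of_tendsto hlim ?_
      filter_upwards [eventually_ge_atTop n] with j hj
      exact ENNReal.toReal_mono (measure_ne_top μ _) (key j hj)
    have := le_antisymm hto ENNReal.toReal_nonneg
    rw [ENNReal.toReal_eq_zero_iff] at this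
    rcases this with h | h
    · exact h
    · exact absurd h (measure_ne_top μ _)
  refine ⟨θlim, ?_, ?_⟩
  · -- θlim is a GLP
    intro θ' hpos
    by_contra hcon
    rw [not_lt, nonpos_iff_eq_zero] at hcon
    have hset : {x | f θlim x = g x ∧ f θ' x ≠ g x} = E θ' \ E θlim := by
      have key : ∀ p q r : Bool, ((p = r ∧ q ≠ r) ↔ (q ≠ r ∧ ¬ p ≠ r)) := by decide
      ext x
      simpa [hEdef, Set.mem_diff, Set.mem_setOf_eq] using key (f θlim x) (f θ' x) (g x)
    rw [hset] at hcon
    have hdom' : Dom θ' θlim := hcon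
    -- μ (E θlim) ≤ μ (E θ')
    have hle : μ (E θlim) ≤ μ (E θ') := by
      have hterm : ∀ n : ℕ, μ (E θlim) ≤ μ (E θ') + (1/2 : ℝ≥0∞) ^ n := by
        intro n
        calc μ (E θlim) ≤ μ (E (u (n + 1))) := dom_le (domLim (n + 1))
          _ ≤ m (u n) + (1/2 : ℝ≥0∞) ^ n := (uE_lt n).le
          _ ≤ μ (E θ') + (1/2 : ℝ≥0∞) ^ n :=
              add_le_add_left (m_le (dom_trans hdom' (domLim n))) _
      have htend : Tendsto (fun n : ℕ => μ (E θ') + (1/2 : ℝ≥0∞) ^ n) atTop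
          (nhds (μ (E θ'))) := by
        have h0 : Tendsto (fun n : ℕ => (1/2 : ℝ≥0∞) ^ n) atTop (nhds 0) :=
          ENNReal.tendsto_pow_atTop_nhds_zero_of_lt_one (by norm_num)
        simpa using (tendsto_const_nhds.add h0)
      exact ge_of_tendsto htend (Eventually.of_forall hterm)
    -- but μ (E θ') < μ (E θlim), contradiction
    have hpos2 : 0 < μ (E θlim \ E θ') := by
      have := hDmeas θ' θlim
      rw [hdom', zero_add] at this
      rw [this] at hpos
      exact hpos
    have hstrict : μ (E θ') < μ (E θlim) := by
      have h1 : μ (E θ') = μ (E θlim ∩ E θ') := by rw [dom_eq hdom', Set.inter_comm]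
      have h2 : μ (E θlim ∩ E θ') + μ (E θlim \ E θ') = μ (E θlim) :=
        measure_inter_add_diff (μ := μ) (E θlim) (hEm θ')
      rw [h1, ← h2]
      exact ENNReal.lt_add_right (measure_ne_top μ _) hpos2.ne'
    exact absurd hle (not_le.2 hstrict)
  · -- a.e. domination of θ = u 0
    have h0 : Dom θlim θ := domLim 0
    rw [ae_iff]
    have hset : {x | ¬ (f θlim x ≠ g x → f θ x ≠ g x)} = E θlim \ E θ := by
      ext x
      simp only [hEdef, Set.mem_diff, Set.mem_setOf_eq, Classical.not_imp]
    rw [hset]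
    exact h0


end
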